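/- Let N be a positive integer, E a real vector space, V : E → ℝ, β ∈ ℝ, δt ∈ ℝ, and d : ℤ/Nℤ → E with ∑_{k ∈ ℤ/Nℤ} d(k) = 0. For x ∈ E and k ∈ ℤ/Nℤ define the acceptance probability A_k(x) = min_{0 ≤ ℓ ≤ N−1} exp(β V(x) − β V(x + δt·(d(k) + d(k+1) + … + d(k+ℓ)))), with index arithmetic in ℤ/Nℤ. Then for every x ∈ E and k ∈ ℤ/Nℤ, exp(−β V(x + δt·d(k))) = exp(−β V(x))·A_k(x) + exp(−β V(x + δt·d(k)))·(1 − A_{k+1}(x + δt·d(k))). -/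
import Mathlib

private lemma mul_inf'_aux {ι : Type*} (c : ℝ) (hc : 0 < c) (s : Finset ι) (h : s.Nonempty)
    (f : ι → ℝ) : c * s.inf' h f = s.inf' h (fun i => c * f i) := by
  apply le_antisymm
  · apply Finset.le_inf'
    intro i hi
    exact mul_le_mul_of_nonneg_left (Finset.inf'_le _ hi) hc.le
  · obtain ⟨i, hi, hfi⟩ := Finset.exists_mem_eq_inf' h f
    calc s.inf' h (fun i => c * f i) ≤ c * f i := Finset.inf'_le _ hi
    _ = c * s.inf' h f := by rw [hfi]

private lemma image_succ_mod (N : ℕ) (hN : 0 < N) :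
    (Finset.range N).image (fun ℓ => (ℓ + 1) % N) = Finset.range N := by
  ext m
  simp only [Finset.mem_image, Finset.mem_range]
  constructor
  · rintro ⟨ℓ, hℓ, rfl⟩
    exact Nat.mod_lt _ hN
  · intro hm
    rcases Nat.eq_zero_or_pos m with rfl | hpos
    · exact ⟨N - 1, by omega, by rw [Nat.sub_add_cancel hN, Nat.mod_self]⟩
    · exact ⟨m - 1, by omega, by rw [Nat.sub_add_cancel hpos, Nat.mod_eq_of_lt hm]⟩

private lemma sum_range_cyclic (N : ℕ) [NeZero N] {E : Type*} [AddCommGroup E]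
    (d : ZMod N → E) (hd : ∑ k : ZMod N, d k = 0) (m : ZMod N) :
    ∑ j ∈ Finset.range N, d (m + (j : ZMod N)) = 0 := by
  have e1 : ∑ j ∈ Finset.range N, d (m + (j : ZMod N)) = ∑ i : ZMod N, d (m + i) := by
    refine Finset.sum_nbij' (fun j => (j : ZMod N)) (fun i => i.val) ?_ ?_ ?_ ?_ ?_
    · intro a _; exact Finset.mem_univ _
    · intro i _; exact Finset.mem_range.mpr (ZMod.val_lt i)
    · intro a ha
      exact ZMod.val_cast_of_lt (Finset.mem_range.mp ha)
    · intro i _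
      exact ZMod.natCast_rightInverse i
    · intro a _; rfl
  rw [e1, ← hd]
  exact Fintype.sum_equiv (Equiv.addLeft m) _ _ (fun i => rfl)

/-- balance equation (5.16) of Remark 5.8. With acceptance
probabilities `A_k(x) = min_{0 ≤ ℓ ≤ N-1} exp (βV(x) - βV(x + δt·(d_k + … + d_{k+ℓ})))`
for cyclic directions summing to zero, the density `e^{-βV}` satisfies the balance
equation of the time-discretized lifted Metropolis chain. -/
theorem lifted_metropolis_balance
    (N : ℕ) [NeZero N] {E : Type*} [AddCommGroup E] [Module ℝ E]
    (V : E → ℝ) (β δt : ℝ) (d : ZMod N → E) (hd : ∑ k : ZMod N, d k = 0)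
    (A : ZMod N → E → ℝ)
    (hA : ∀ k x, A k x = (Finset.range N).inf'
      (Finset.nonempty_range_iff.mpr (NeZero.ne N))
      (fun ℓ => Real.exp (β * V x
        - β * V (x + δt • ∑ j ∈ Finset.range (ℓ + 1), d (k + (j : ZMod N))))))
    (x : E) (k : ZMod N) :
    Real.exp (-(β * V (x + δt • d k)))
      = Real.exp (-(β * V x)) * A k x
        + Real.exp (-(β * V (x + δt • d k))) * (1 - A (k + 1) (x + δt • d k)) := by
  have hN : 0 < N := Nat.pos_of_ne_zero (NeZero.ne N)
  set y := x + δt • d k with hy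
  have hne : (Finset.range N).Nonempty := Finset.nonempty_range_iff.mpr (NeZero.ne N)
  -- g ℓ is the target density at the ℓ-th point of the cycle starting at (x, k)
  set g : ℕ → ℝ := fun ℓ =>
    Real.exp (-(β * V (x + δt • ∑ j ∈ Finset.range (ℓ + 1), d (k + (j : ZMod N))))) with hg
  have key₁ : Real.exp (-(β * V x)) * A k x = (Finset.range N).inf' hne g := by
    rw [hA, mul_inf'_aux _ (Real.exp_pos _)]
    apply Finset.inf'_congr _ rfl
    intro ℓ _
    rw [hg, ← Real.exp_add]
    ring_nf
  -- the points of the cycle starting at (y, k+1) are the cyclic shift of the former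
  have hpoint : ∀ ℓ ∈ Finset.range N,
      y + δt • ∑ j ∈ Finset.range (ℓ + 1), d (k + 1 + (j : ZMod N))
        = x + δt • ∑ j ∈ Finset.range ((ℓ + 1) % N + 1), d (k + (j : ZMod N)) := by
    intro ℓ hℓ
    rw [Finset.mem_range] at hℓ
    rcases Nat.lt_or_ge (ℓ + 1) N with h | h
    · rw [Nat.mod_eq_of_lt h]
      have hs : ∑ j ∈ Finset.range (ℓ + 1 + 1), d (k + (j : ZMod N))
          = d k + ∑ j ∈ Finset.range (ℓ + 1), d (k + 1 + (j : ZMod N)) := by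
        rw [Finset.sum_range_succ', add_comm]
        congr 1
        · norm_num
        · apply Finset.sum_congr rfl
          intro j _
          congr 1
          push_cast
          ring
      rw [hs, smul_add, hy]
      abel
    · have hN' : ℓ + 1 = N := by omega
      rw [hN', Nat.mod_self]
      have hs : ∑ j ∈ Finset.range N, d (k + 1 + (j : ZMod N)) = 0 :=
        sum_range_cyclic N d hd (k + 1)
      rw [hs, smul_zero, add_zero, hy]
      simp
  have key₂ : Real.exp (-(β * V y)) * A (k + 1) y
      = (Finset.range N).inf' hne (fun ℓ => g ((ℓ + 1) % N)) := by
    rw [hA, mul_inf'_aux _ (Real.exp_pos _)]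
    apply Finset.inf'_congr _ rfl
    intro ℓ hℓ
    rw [hg]
    simp only
    rw [hpoint ℓ hℓ, ← Real.exp_add]
    ring_nf
  have key₃ : (Finset.range N).inf' hne (fun ℓ => g ((ℓ + 1) % N))
      = (Finset.range N).inf' hne g := by
    have := Finset.inf'_image (s := Finset.range N) (f := fun ℓ => (ℓ + 1) % N)
      (hs := by rw [image_succ_mod N hN]; exact hne) g
    rw [Finset.inf'_congr _ (image_succ_mod N hN) (fun _ _ => rfl)] at this
    exact this.symm
  have key : Real.exp (-(β * V x)) * A k x = Real.exp (-(β * V y)) * A (k + 1) y := by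
    rw [key₁, key₂, key₃]
  rw [mul_one_sub, ← key]
  ring
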